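/- For every finite word w, D_∞(w) ≤ D(w^(+) w^(+)), where D_∞(w) is the minimum defect over infinite words over Alph(w) containing w. -/

import Mathlib

open List

variable {A : Type*}

/-- All factors (contiguous subwords) of a word, as a list. -/
def Factors (w : List A) : List (List A) := w.tails.flatMap List.inits

/-- The set of distinct palindromic factors of `w` (including the empty word). -/
def palFactors [DecidableEq A] (w : List A) : Finset (List A) :=
  ((Factors w).filter (fun u => decide (u.reverse = u))).toFinset

/-- A word is rich if it has exactly `|w| + 1` distinct palindromic factors. -/
def IsRich [DecidableEq A] (w : List A) : Prop :=
  (palFactors w).card = w.length + 1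

/-- The defect of a finite word. -/
def defect [DecidableEq A] (w : List A) : ℕ :=
  w.length + 1 - (palFactors w).card

/-- `u` is a (finite) factor of the infinite word `z`. -/
def FactorOfInf (u : List A) (z : ℕ → A) : Prop :=
  ∃ i, u = (List.range u.length).map (fun k => z (i + k))

/-- An infinite word is rich if all of its finite factors are rich. -/
def InfRich [DecidableEq A] (z : ℕ → A) : Prop :=
  ∀ u : List A, FactorOfInf u z → IsRich u

/-- The longest palindromic suffix of `w`. -/
def lps [DecidableEq A] (w : List A) : List A :=
  (w.tails.find? (fun u => decide (u.reverse = u))).getD []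

/-- The number of occurrences of `u` as a factor of `w` (counted by position). -/
def occCount [DecidableEq A] (u w : List A) : ℕ :=
  w.tails.countP (fun t => decide (u <+: t))

/-- The periodic infinite word `u^∞`. -/
def periodicWord (u : List A) (hu : u ≠ []) : ℕ → A :=
  fun i => u.get ⟨i % u.length, Nat.mod_lt _ (List.length_pos_iff.mpr hu)⟩
section Part1
variable {A : Type*} [DecidableEq A]

lemma mem_Factors {w u : List A} : u ∈ Factors w ↔ u <:+: w := by
  simp only [Factors, List.mem_flatMap, List.mem_tails, List.mem_inits,
    List.infix_iff_prefix_suffix]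
  tauto

lemma mem_palFactors {w u : List A} : u ∈ palFactors w ↔ u.reverse = u ∧ u <:+: w := by
  simp only [palFactors, List.mem_toFinset, List.mem_filter, mem_Factors,
    decide_eq_true_eq]
  tauto

lemma palFactors_mono {x y : List A} (h : x <:+: y) : palFactors x ⊆ palFactors y := by
  intro u hu
  rw [mem_palFactors] at hu ⊢
  exact ⟨hu.1, hu.2.trans h⟩

/-- A palindromic factor of `x ++ [a]` which is not a factor of `x` is a suffix. -/
lemma new_pal_suffix {x u : List A} {a : A} (hinf : u <:+: x ++ [a]) (hnot : ¬ u <:+: x) :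
    u <:+ x ++ [a] := by
  obtain ⟨s, t, h⟩ := hinf
  rcases List.eq_nil_or_concat t with rfl | ⟨t', b, rfl⟩
  · exact ⟨s, by simpa using h⟩
  · exfalso
    apply hnot
    simp only [List.concat_eq_append, ← List.append_assoc] at h
    obtain ⟨h1, -⟩ := List.append_inj' h.symm rfl
    exact ⟨s, t', by simp [h1]⟩

lemma card_step_le {x : List A} {a : A} :
    (palFactors (x ++ [a])).card ≤ (palFactors x).card + 1 ∧
    ((∃ s : List A, s.reverse = s ∧ s <:+ x ++ [a] ∧ ¬ s <:+: x) →
      (palFactors (x ++ [a])).card = (palFactors x).card + 1) := by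
  have hsub : palFactors x ⊆ palFactors (x ++ [a]) :=
    palFactors_mono ((List.prefix_append x [a]).isInfix)
  have hcard : (palFactors (x ++ [a]) \ palFactors x).card + (palFactors x).card
      = (palFactors (x ++ [a])).card := Finset.card_sdiff_add_card_eq_card hsub
  have key : ∀ u ∈ palFactors (x ++ [a]) \ palFactors x,
      ∀ v ∈ palFactors (x ++ [a]) \ palFactors x, u.length ≤ v.length → u = v := by
    intro u hu v hv hlen
    rw [Finset.mem_sdiff, mem_palFactors, mem_palFactors] at hu hv
    have hus : u <:+ x ++ [a] := new_pal_suffix hu.1.2 (fun h => hu.2 ⟨hu.1.1, h⟩)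
    have hvs : v <:+ x ++ [a] := new_pal_suffix hv.1.2 (fun h => hv.2 ⟨hv.1.1, h⟩)
    have huv : u <:+ v := List.suffix_of_suffix_length_le hus hvs hlen
    rcases Nat.lt_or_ge u.length v.length with hlt | hge
    · -- u is a proper suffix of v, hence (v pal) a proper prefix, hence factor of x
      exfalso
      have hup : u <+: v := by
        have h2 := List.reverse_prefix.mpr huv
        rwa [hu.1.1, hv.1.1] at h2
      obtain ⟨m, hm⟩ := hup
      obtain ⟨l, hl⟩ := hvs
      apply hu.2
      refine ⟨hu.1.1, ?_⟩
      have hmne : m ≠ [] := by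
        intro h; rw [h, List.append_nil] at hm; rw [hm] at hlt; omega
      obtain ⟨m', b, rfl⟩ := (List.eq_nil_or_concat m).resolve_left hmne
      have : x ++ [a] = l ++ u ++ m' ++ [b] := by
        rw [← hl, ← hm]; simp [List.concat_eq_append, List.append_assoc]
      obtain ⟨h1, -⟩ := List.append_inj' this rfl
      exact ⟨l, m', by simp [h1, List.append_assoc]⟩
    · exact huv.eq_of_length (le_antisymm hlen hge)
  have hone : (palFactors (x ++ [a]) \ palFactors x).card ≤ 1 := by
    rw [Finset.card_le_one]
    intro u hu v hv
    rcases Nat.le_total u.length v.length with h | h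
    · exact key u hu v hv h
    · exact (key v hv u hu h).symm
  constructor
  · omega
  · rintro ⟨s, hs1, hs2, hs3⟩
    have hsmem : s ∈ palFactors (x ++ [a]) \ palFactors x := by
      rw [Finset.mem_sdiff, mem_palFactors, mem_palFactors]
      exact ⟨⟨hs1, hs2.isInfix⟩, fun h => hs3 h.2⟩
    have : 1 ≤ (palFactors (x ++ [a]) \ palFactors x).card :=
      Finset.card_pos.mpr ⟨s, hsmem⟩
    omega

end Part1
section Part2
variable {A : Type*} [DecidableEq A]

lemma defect_step_le {x : List A} {a : A} : defect x ≤ defect (x ++ [a]) := by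
  have h1 := (card_step_le (x := x) (a := a)).1
  have h2 : (palFactors x).card ≤ (palFactors (x ++ [a])).card :=
    Finset.card_le_card (palFactors_mono (List.prefix_append x [a]).isInfix)
  unfold defect
  simp only [List.length_append, List.length_singleton]
  omega

lemma defect_step_eq {x : List A} {a : A}
    (h : ∃ s : List A, s.reverse = s ∧ s <:+ x ++ [a] ∧ ¬ s <:+: x) :
    defect (x ++ [a]) = defect x := by
  have h1 := (card_step_le (x := x) (a := a)).2 h
  unfold defect
  simp only [List.length_append, List.length_singleton]
  omega

lemma defect_append_le (x t : List A) : defect x ≤ defect (x ++ t) := by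
  induction t using List.reverseRecOn with
  | nil => simp
  | append_singleton t a ih =>
      calc defect x ≤ defect (x ++ t) := ih
        _ ≤ defect (x ++ t ++ [a]) := defect_step_le
        _ = defect (x ++ (t ++ [a])) := by rw [List.append_assoc]

lemma palFactors_reverse (x : List A) : palFactors x.reverse = palFactors x := by
  ext u
  rw [mem_palFactors, mem_palFactors]
  constructor
  · rintro ⟨h1, h2⟩
    refine ⟨h1, ?_⟩
    rw [← h1] at h2
    exact List.reverse_infix.mp h2
  · rintro ⟨h1, h2⟩
    refine ⟨h1, ?_⟩
    have := List.reverse_infix.mpr h2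
    rwa [h1] at this
  
lemma defect_reverse (x : List A) : defect x.reverse = defect x := by
  unfold defect; rw [palFactors_reverse, List.length_reverse]

lemma defect_infix_le {u y : List A} (h : u <:+: y) : defect u ≤ defect y := by
  obtain ⟨s, t, rfl⟩ := h
  calc defect u ≤ defect (u ++ t) := defect_append_le u t
    _ = defect ((u ++ t).reverse) := (defect_reverse _).symm
    _ ≤ defect ((u ++ t).reverse ++ s.reverse) := defect_append_le _ _
    _ = defect (s ++ (u ++ t)).reverse := by simp [List.reverse_append]
    _ = defect (s ++ u ++ t) := by rw [defect_reverse, List.append_assoc]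

end Part2
section Part3
variable {A : Type*}

/-- The factor of the infinite word `f` at position `i` of length `ℓ`. -/
def fac (f : ℕ → A) (i ℓ : ℕ) : List A := (List.range ℓ).map (fun k => f (i + k))

@[simp] lemma fac_length (f : ℕ → A) (i ℓ : ℕ) : (fac f i ℓ).length = ℓ := by
  simp [fac]

lemma fac_getElem (f : ℕ → A) {i ℓ k : ℕ} (h : k < ℓ) :
    (fac f i ℓ)[k]'(by simpa using h) = f (i + k) := by
  simp [fac]

lemma fac_append (f : ℕ → A) (i a b : ℕ) :
    fac f i a ++ fac f (i + a) b = fac f i (a + b) := by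
  unfold fac
  rw [List.range_add, List.map_append, List.map_map]
  congr 1
  apply List.map_congr_left
  intro k _
  simp [Function.comp, Nat.add_assoc]

lemma fac_suffix (f : ℕ → A) (i ℓ : ℕ) : fac f i ℓ <:+ fac f 0 (i + ℓ) :=
  ⟨fac f 0 i, by have := fac_append f 0 i ℓ; simpa using this⟩

lemma pref_prefix (f : ℕ → A) {a b : ℕ} (h : a ≤ b) : fac f 0 a <+: fac f 0 b :=
  ⟨fac f a (b - a), by rw [show fac f a (b-a) = fac f (0 + a) (b-a) by rw [Nat.zero_add],
    fac_append f 0 a (b-a), Nat.add_sub_cancel' h]⟩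

lemma infix_fac {f : ℕ → A} {u : List A} {m : ℕ} (h : u <:+: fac f 0 m) :
    ∃ i, i + u.length ≤ m ∧ u = fac f i u.length := by
  obtain ⟨s, t, hst⟩ := h
  have hlen : s.length + u.length + t.length = m := by
    have := congrArg List.length hst
    simpa [Nat.add_assoc] using this
  refine ⟨s.length, by omega, ?_⟩
  apply List.ext_getElem (by simp)
  intro k h1 h2
  have hk : k < u.length := h1
  have hget : (fac f 0 m)[s.length + k]'(by simp; omega) = u[k] := by
    rw [← List.getElem_of_eq hst (by simp [← hst]; omega)]
    rw [List.getElem_append]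
    split
    · rw [List.getElem_append]
      split
      · exfalso; omega
      · congr 1; omega
    · exfalso; simp at *; omega
  rw [fac_getElem f (by omega : k < u.length)]
  rw [← hget, fac_getElem f (by omega : s.length + k < m)]
  simp

end Part3
section Part4
variable {A : Type*}

theorem periodic_defect_le [DecidableEq A] (p : List A) (hp : p ≠ []) (hpal : p.reverse = p) :
    ∀ u : List A, FactorOfInf u (periodicWord p hp) → defect u ≤ defect (p ++ p) := by
  classical
  have hN0 : 0 < p.length := List.length_pos_iff.mpr hp
  have fval : ∀ i, periodicWord p hp i = p[i % p.length]'(Nat.mod_lt i hN0) :=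
    fun i => rfl
  set N := p.length with hN
  set f := periodicWord p hp with hfdef
  -- basic facts
  have f_eq : ∀ i (h : i < N), f i = p[i]'h := by
    intro i h
    rw [fval]
    congr 1
    exact Nat.mod_eq_of_lt h
  have QN : ∀ i, f i = f (i % N) := by
    intro i
    rw [fval, fval]
    congr 1
    exact (Nat.mod_mod_of_dvd i dvd_rfl).symm
  have hex : ∃ ℓ, 0 < ℓ ∧ ℓ ∣ N ∧ ∀ i, f i = f (i % ℓ) := ⟨N, hN0, dvd_rfl, QN⟩
  set L := Nat.find hex with hLdef
  obtain ⟨hL0, hLdvd, hLper⟩ := Nat.find_spec hex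
  have hLN : L ≤ N := Nat.le_of_dvd hN0 hLdvd
  have hmin' : ∀ g, 0 < g → g ∣ N → (∀ i, f i = f (i % g)) → L ≤ g :=
    fun g a b c => Nat.find_min' hex ⟨a, b, c⟩
  have f_congr : ∀ {a b : ℕ}, a % L = b % L → f a = f b := by
    intro a b h
    rw [hLper a, hLper b, h]
  have PerL : ∀ t, f (t + L) = f t :=
    fun t => f_congr (Nat.add_mod_right t L)
  have per_mul : ∀ e, (∀ t, f (t + e) = f t) → ∀ k t, f (t + e * k) = f t := by
    intro e he k
    induction k with
    | zero => simp
    | succ k ih =>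
        intro t
        have h1 : t + e * (k + 1) = (t + e * k) + e := by ring
        rw [h1, he, ih]
  have per_gcd : ∀ a b : ℕ, (∀ t, f (t + a) = f t) → (∀ t, f (t + b) = f t) →
      ∀ t, f (t + Nat.gcd a b) = f t := by
    intro a b
    induction a, b using Nat.gcd.induction with
    | H0 n => intro _ hb t; simpa using hb t
    | H1 m n hm ih =>
        intro ha hb t
        rw [Nat.gcd_rec m n]
        apply ih
        · intro s
          have h1 : s + n % m + m * (n / m) = s + n := by
            have := Nat.mod_add_div n m; omega
          have h2 := per_mul m ha (n / m) (s + n % m)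
          rw [h1] at h2
          rw [← h2, hb]
        · exact ha
  have hrot : ∀ d, 0 < d → d < L → (∀ t, f (t + d) = f t) → False := by
    intro d hd0 hdL hper
    have hg : ∀ t, f (t + Nat.gcd d L) = f t := per_gcd d L hper PerL
    have hg0 : 0 < Nat.gcd d L := Nat.gcd_pos_of_pos_left L hd0
    have hgL : Nat.gcd d L ∣ L := Nat.gcd_dvd_right d L
    have hgper : ∀ i, f i = f (i % Nat.gcd d L) := by
      intro i
      conv_lhs => rw [show i = i % Nat.gcd d L + Nat.gcd d L * (i / Nat.gcd d L) from
        (Nat.mod_add_div i (Nat.gcd d L)).symm]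
      exact per_mul _ hg _ _
    have h1 := hmin' _ hg0 (hgL.trans hLdvd) hgper
    have h2 : Nat.gcd d L ≤ d := Nat.le_of_dvd hd0 (Nat.gcd_dvd_left d L)
    omega
  have hpal' : ∀ i, (h : i < N) → f i = f (N - 1 - i) := by
    intro i h
    rw [f_eq i h, f_eq (N - 1 - i) (by omega)]
    rw [← List.getElem_of_eq hpal (by simpa [hN] using h)]
    exact List.getElem_reverse _
  have hrev : ∀ a b : ℕ, (a + b) % L = L - 1 → f a = f b := by
    intro a b hab
    rw [hLper a, hLper b]
    have ha' : a % L < L := Nat.mod_lt _ hL0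
    have hb' : b % L < L := Nat.mod_lt _ hL0
    have hsum : a % L + b % L = L - 1 := by
      have h1 : (a % L + b % L) % L = L - 1 := by rw [← Nat.add_mod]; exact hab
      rcases Nat.lt_or_ge (a % L + b % L) L with h | h
      · rw [Nat.mod_eq_of_lt h] at h1; exact h1
      · rw [Nat.mod_eq_sub_mod h, Nat.mod_eq_of_lt (by omega)] at h1
        omega
    rw [hpal' (a % L) (by omega)]
    apply f_congr
    obtain ⟨e, he⟩ : (L : ℕ) ∣ N - L := Nat.dvd_sub hLdvd dvd_rfl
    have h3 : N - 1 - a % L = L * e + b % L := by omega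
    rw [h3, Nat.mul_add_mod]
  -- the key step
  have main_step : ∀ m, 2 * L ≤ m → defect (fac f 0 (m + 1)) = defect (fac f 0 m) := by
    intro m hm
    have hjL : m % L < L := Nat.mod_lt _ hL0
    set j := m % L + 1 with hj
    set i0 := L - j with hi0
    set ℓ := m + 1 - i0 with hℓ
    have hi0m : i0 + ℓ = m + 1 := by omega
    have hLℓ : L ≤ ℓ := by omega
    set S := fac f i0 ℓ with hS
    have hsplit : fac f 0 (m + 1) = fac f 0 m ++ [f m] := by
      rw [← fac_append f 0 m 1]
      congr 1
      simp [fac, List.range_succ]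
    have hSsuf : S <:+ fac f 0 (m + 1) := by
      rw [← hi0m]; exact fac_suffix f i0 ℓ
    have hSpal : S.reverse = S := by
      apply List.ext_getElem (by simp)
      intro k h1 h2
      have hk : k < ℓ := by simpa [hS] using h2
      rw [List.getElem_reverse]
      simp only [hS, fac_length]
      rw [fac_getElem f (by omega : ℓ - 1 - k < ℓ), fac_getElem f hk]
      apply hrev
      have hdm := Nat.div_add_mod m L
      have hsum : (i0 + (ℓ - 1 - k)) + (i0 + k) = L * (m / L) + (L - 1) := by omega
      rw [hsum, Nat.mul_add_mod, Nat.mod_eq_of_lt (by omega)]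
    have hSnot : ¬ S <:+: fac f 0 m := by
      intro hinf
      obtain ⟨i', hi'm, hi'eq⟩ := infix_fac hinf
      simp only [hS, fac_length] at hi'm hi'eq
      have hii : i' < i0 := by omega
      set d := i0 - i' with hd
      have hd0 : 0 < d := by omega
      have hdL : d < L := by omega
      have hpt : ∀ k, k < ℓ → f (i' + d + k) = f (i' + k) := by
        intro k hk
        have h1 := List.getElem_of_eq hi'eq (by simpa using hk : k < (fac f i0 ℓ).length)
        rw [fac_getElem f hk, fac_getElem f hk] at h1
        have h2 : i' + d + k = i0 + k := by omega
        rw [h2]; exact h1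
      have hper : ∀ t, f (t + d) = f t := by
        intro t
        set k := (t % L + (L - i' % L)) % L with hk
        have hkL : k < L := Nat.mod_lt _ hL0
        have hiL : i' % L < L := Nat.mod_lt _ hL0
        have hcong : (i' + k) % L = t % L := by
          rw [Nat.add_mod i' k, hk, Nat.mod_mod_of_dvd _ dvd_rfl, ← Nat.add_mod]
          have hiDM := Nat.mod_add_div i' L
          have h6 : i' + (t % L + (L - i' % L)) = L * (i' / L) + (t % L + L) := by omega
          rw [h6, Nat.mul_add_mod, Nat.add_mod_right, Nat.mod_mod_of_dvd _ dvd_rfl]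
        have h2 := hpt k (lt_of_lt_of_le hkL hLℓ)
        have e1 : f (t + d) = f (i' + d + k) := by
          apply f_congr
          have h6 : i' + d + k = (i' + k) + d := by omega
          rw [h6, Nat.add_mod (i' + k) d, hcong, ← Nat.add_mod]
        have e2 : f t = f (i' + k) := f_congr hcong.symm
        rw [e1, e2]; exact h2
      exact hrot d hd0 hdL hper
    rw [hsplit]
    apply defect_step_eq
    exact ⟨S, hSpal, by rw [← hsplit]; exact hSsuf, hSnot⟩
  have const : ∀ k, defect (fac f 0 (2 * L + k)) = defect (fac f 0 (2 * L)) := by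
    intro k
    induction k with
    | zero => rfl
    | succ k ih =>
        rw [show 2 * L + (k + 1) = (2 * L + k) + 1 by omega,
          main_step (2 * L + k) (by omega), ih]
  have hpp : p ++ p = fac f 0 (2 * N) := by
    apply List.ext_getElem (by simp [hN]; omega)
    intro i h1 h2
    have h2' : i < 2 * N := by simpa using h2
    rw [fac_getElem f h2', Nat.zero_add]
    rcases Nat.lt_or_ge i N with h | h
    · rw [f_eq i h, List.getElem_append]
      split
      · rfl
      · exfalso; rw [← hN] at *; omega
    · have hmod : i % N = i - N := by
        rw [Nat.mod_eq_sub_mod h, Nat.mod_eq_of_lt (by omega)]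
      rw [QN i, f_eq (i % N) (Nat.mod_lt _ hN0), List.getElem_append]
      split
      · exfalso; rw [← hN] at *; omega
      · congr 1; rw [← hN]; omega
  have hbound : ∀ m, defect (fac f 0 m) ≤ defect (p ++ p) := by
    intro m
    rcases Nat.le_total m (2 * L) with h | h
    · exact defect_infix_le (hpp ▸ (pref_prefix f (by omega : m ≤ 2 * N)).isInfix)
    · obtain ⟨k, rfl⟩ := Nat.exists_eq_add_of_le h
      rw [const k]
      exact defect_infix_le (hpp ▸ (pref_prefix f (by omega : 2 * L ≤ 2 * N)).isInfix)
  rintro u ⟨i, hu⟩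
  have hu' : u = fac f i u.length := hu
  calc defect u = defect (fac f i u.length) := by rw [← hu']
    _ ≤ defect (fac f 0 (i + u.length)) := defect_infix_le (fac_suffix f i u.length).isInfix
    _ ≤ defect (p ++ p) := hbound _

end Part4
theorem infinite_defect_le_defect_double_closure [DecidableEq A] (w p : List A)
    (hw : w ≠ []) (hpal : p.reverse = p) (hpref : w <+: p)
    (hmin : ∀ q : List A, q.reverse = q → w <+: q → p.length ≤ q.length) :
    ∃ z : ℕ → A, (∀ i, z i ∈ w) ∧ FactorOfInf w z ∧
      ∀ u : List A, FactorOfInf u z → defect u ≤ defect (p ++ p) := by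
  have hp : p ≠ [] := by
    intro h; rw [h] at hpref; exact hw (List.prefix_nil.mp hpref)
  have hN0 : 0 < p.length := List.length_pos_iff.mpr hp
  have hlen2 : p.length ≤ 2 * w.length := by
    have h1 : (w ++ w.reverse).reverse = w ++ w.reverse := by
      rw [List.reverse_append, List.reverse_reverse]
    have := hmin (w ++ w.reverse) h1 (List.prefix_append w w.reverse)
    simp at this; omega
  obtain ⟨t, ht⟩ := hpref
  have hwlen : w.length ≤ p.length := by
    rw [← ht]; simp
  have pg : ∀ (i : ℕ) (h : i < p.length), p[i]'h = p[p.length - 1 - i]'(by omega) := by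
    intro i h
    rw [← List.getElem_of_eq hpal (by simpa using h)]
    exact List.getElem_reverse _
  have hmemw : ∀ (i : ℕ) (h : i < p.length), p[i]'h ∈ w := by
    have base : ∀ (i : ℕ) (h : i < w.length), p[i]'(by omega) ∈ w := by
      intro i h
      have : p[i]'(by omega) = w[i]'h := by
        rw [← List.getElem_of_eq ht (by rw [ht]; omega), List.getElem_append]
        split
        · rfl
        · exfalso; omega
      rw [this]
      exact List.getElem_mem h
    intro i h
    rcases Nat.lt_or_ge i w.length with h' | h'
    · exact base i h'
    · rw [pg i h]
      exact base _ (by omega)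
  refine ⟨periodicWord p hp, ?_, ?_, periodic_defect_le p hp hpal⟩
  · intro i
    exact hmemw (i % p.length) (Nat.mod_lt _ hN0)
  · refine ⟨0, ?_⟩
    apply List.ext_getElem (by simp)
    intro k h1 h2
    rw [List.getElem_map, List.getElem_range]
    show w[k]'h1 = p[(0 + k) % p.length]'(Nat.mod_lt _ hN0)
    have hk : (0 + k) % p.length = k := by
      rw [Nat.zero_add, Nat.mod_eq_of_lt (by omega)]
    rw [← List.getElem_of_eq ht (by rw [ht]; exact Nat.mod_lt _ hN0), List.getElem_append]
    split
    · congr 1; omega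
    · exfalso; omega
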